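/- Let G be a finitely generated nilpotent group whose torsion subgroup T is nontrivial and finite of odd order. Then every finite conjugacy class of G is either abelian as a subrack (x*y*x⁻¹ = y for all x, y in the class) or of type C. -/

import Mathlib

/-- A subset `X` of a group `G` is a subrack if it is closed under conjugation
and inverse conjugation. -/
def IsSubrack {G : Type*} [Group G] (X : Set G) : Prop :=
  ∀ x ∈ X, ∀ y ∈ X, x * y * x⁻¹ ∈ X ∧ x⁻¹ * y * x ∈ X

/-- A finite subrack `X` of a group `G` is of type C. -/
def IsTypeC {G : Type*} [Group G] (X : Set G) : Prop :=
  ∃ R S : Set G, R.Nonempty ∧ S.Nonempty ∧ Disjoint R S ∧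
    R ∪ S ⊆ X ∧ IsSubrack (R ∪ S) ∧
    ∃ r ∈ R, ∃ s ∈ S,
      r * s * r⁻¹ ≠ s ∧
      R = {y | ∃ h ∈ Subgroup.closure (R ∪ S), h * r * h⁻¹ = y} ∧
      S = {y | ∃ h ∈ Subgroup.closure (R ∪ S), h * s * h⁻¹ = y} ∧
      (2 < min (Nat.card R) (Nat.card S) ∨ 4 < max (Nat.card R) (Nat.card S))

section AuxLemmas
open Subgroup
open scoped commutatorElement

private lemma comm_pow_eq {Γ : Type*} [Group Γ] (v a : Γ) (h : Commute ⁅v,a⁆ a) (m : ℕ) :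
    ⁅v, a^m⁆ = ⁅v,a⁆^m := by
  have h1 : v * a * v⁻¹ = ⁅v,a⁆ * a := by group
  have h2 : v * a^m * v⁻¹ = (v * a * v⁻¹)^m := (conj_pow).symm
  have h3 : ⁅v, a^m⁆ = v * a^m * v⁻¹ * (a^m)⁻¹ := rfl
  rw [h3, h2, h1, h.mul_pow, mul_assoc, mul_inv_cancel, mul_one]

private lemma cent0 {Γ : Type*} [Group Γ] [Group.IsNilpotent Γ]
    (htf : ∀ g : Γ, IsOfFinOrder g → g = 1) {a : Γ} {m : ℕ} (hm : m ≠ 0)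
    (hc : ∀ v : Γ, Commute v (a^m)) (b : Γ) : Commute b a := by
  set D : Γ → Γ := fun v => ⁅v, a⁆ with hD
  have aux : ∀ n : ℕ, ∀ v : Γ, D^[n+1] v = 1 → D v = 1 := by
    intro n
    induction n with
    | zero => intro v h; simpa using h
    | succ n ih =>
      intro v h
      rw [Function.iterate_succ_apply] at h
      have hDv : D (D v) = 1 := ih (D v) h
      have hcomm : Commute ⁅v, a⁆ a := commutatorElement_eq_one_iff_commute.mp hDv
      have h1 : ⁅v, a^m⁆ = 1 := (hc v).commutator_eq
      have h2 : ⁅v,a⁆^m = 1 := by rw [← comm_pow_eq v a hcomm m, h1]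
      exact htf _ (isOfFinOrder_iff_pow_eq_one.mpr ⟨m, Nat.pos_of_ne_zero hm, h2⟩)
  have mem : ∀ n : ℕ, ∀ v : Γ, D^[n] v ∈ Subgroup.lowerCentralSeries ⊤ n := by
    intro n
    induction n with
    | zero => intro v; simp [Subgroup.lowerCentralSeries_zero]
    | succ n ih =>
      intro v
      rw [Function.iterate_succ_apply']
      exact commutator_mem_commutator (ih v) (mem_top a)
  obtain ⟨n, hn⟩ := Subgroup.nilpotent_iff_lowerCentralSeries.mp ‹_›
  have hb : D^[n] b = 1 := by
    have := mem n b
    rw [hn] at this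
    simpa using this
  cases n with
  | zero =>
    simp at hb
    simp [hb]
  | succ n =>
    have := aux n b hb
    exact commutatorElement_eq_one_iff_commute.mp this

/-- In a torsion-free nilpotent group, centralizers are isolated. -/
private lemma cent {Γ : Type*} [Group Γ] [Group.IsNilpotent Γ]
    (htf : ∀ g : Γ, IsOfFinOrder g → g = 1) {a b : Γ} {m : ℕ} (hm : m ≠ 0)
    (h : Commute (a^m) b) : Commute a b := by
  set C := Subgroup.centralizer {a^m} with hC
  have haC : a ∈ C := mem_centralizer_iff.mpr (by
    rintro g hg
    rw [Set.mem_singleton_iff] at hg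
    subst hg
    exact ((Commute.refl a).pow_left m))
  have hbC : b ∈ C := mem_centralizer_iff.mpr (by
    rintro g hg
    rw [Set.mem_singleton_iff] at hg
    subst hg
    exact h)
  have htf' : ∀ g : ↥C, IsOfFinOrder g → g = 1 := by
    intro g hg
    have h1 : IsOfFinOrder (C.subtype g) := C.subtype.isOfFinOrder hg
    have h2 := htf _ h1
    exact Subtype.ext (by simpa using h2)
  have hc : ∀ v : ↥C, Commute v ((⟨a, haC⟩ : ↥C)^m) := by
    intro v
    have hv := mem_centralizer_iff.mp v.2
    have := hv (a^m) (Set.mem_singleton _)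
    refine Subtype.ext ?_
    push_cast
    simpa [mul_comm] using this.symm
  have := cent0 htf' hm hc (⟨b, hbC⟩ : ↥C)
  have h2 : b * a = a * b := congrArg Subtype.val this
  exact h2.symm

private lemma abelian_of_top {Γ : Type*} [Group Γ] [Group.IsNilpotent Γ] {a b h : Γ}
    (htop : (⊤ : Subgroup Γ) = Subgroup.closure {a, b}) (hcon : h * a * h⁻¹ = b) :
    Commute a b := by
  set c := a⁻¹ * b with hc
  have hcmem : c ∈ commutator Γ := by
    have : c = ⁅a⁻¹, h⁆ := by rw [hc, ← hcon]; group
    rw [this, _root_.commutator_def]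
    exact commutator_mem_commutator (mem_top _) (mem_top _)
  have claim : ∀ n : ℕ, commutator Γ ≤ Subgroup.lowerCentralSeries ⊤ (n+1) := by
    intro n
    induction n with
    | zero => rw [Subgroup.top_lowerCentralSeries_one]
    | succ n ih =>
      set N := Subgroup.lowerCentralSeries (⊤ : Subgroup Γ) (n+1) with hN
      have hNnormal : N.Normal := inferInstance
      have haW : a ∈ closure {a} ⊔ N :=
        Subgroup.mem_sup_left (Subgroup.mem_closure_singleton.mpr ⟨1, zpow_one a⟩)
      have hcW : c ∈ closure {a} ⊔ N := Subgroup.mem_sup_right (ih hcmem)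
      have hW : closure {a} ⊔ N = ⊤ := by
        refine le_antisymm le_top ?_
        rw [htop]
        refine (closure_le _).mpr ?_
        intro y hy
        rcases Set.mem_insert_iff.mp hy with h1 | h1
        · rw [h1]; exact haW
        · rw [Set.mem_singleton_iff.mp h1]
          have hb : b = a * c := by rw [hc]; group
          rw [hb]
          exact mul_mem haW hcW
      -- decomposition of arbitrary elements
      have hdec : ∀ g : Γ, ∃ (k : ℤ) (w : Γ), w ∈ N ∧ g = a ^ k * w := by
        intro g
        have hg : g ∈ ((closure {a} ⊔ N : Subgroup Γ) : Set Γ) := by rw [hW]; trivial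
        rw [Subgroup.mul_normal] at hg
        obtain ⟨u, hu, w, hw, rfl⟩ := hg
        obtain ⟨k, rfl⟩ := mem_closure_singleton.mp hu
        exact ⟨k, w, hw, rfl⟩
      -- quotient by LCS (n+2)
      set q := QuotientGroup.mk' (Subgroup.lowerCentralSeries (⊤ : Subgroup Γ) (n+2)) with hq
      have hker : ∀ g : Γ, q g = 1 ↔ g ∈ Subgroup.lowerCentralSeries (⊤ : Subgroup Γ) (n+2) := by
        intro g
        exact QuotientGroup.eq_one_iff g
      have hcentral : ∀ w ∈ N, ∀ g : Γ, Commute (q w) (q g) := by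
        intro w hw g
        have : ⁅w, g⁆ ∈ Subgroup.lowerCentralSeries (⊤ : Subgroup Γ) (n+2) :=
          commutator_mem_commutator hw (mem_top g)
        have h1 : q ⁅w, g⁆ = 1 := (hker _).mpr this
        rw [map_commutatorElement] at h1
        exact commutatorElement_eq_one_iff_commute.mp h1
      -- show every commutator of Γ lies in LCS (n+2)
      have key : ∀ g₁ g₂ : Γ, ⁅g₁, g₂⁆ ∈ Subgroup.lowerCentralSeries (⊤ : Subgroup Γ) (n+2) := by
        intro g₁ g₂
        obtain ⟨k, w₁, hw₁, rfl⟩ := hdec g₁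
        obtain ⟨j, w₂, hw₂, rfl⟩ := hdec g₂
        refine (hker _).mp ?_
        rw [map_commutatorElement]
        refine commutatorElement_eq_one_iff_commute.mpr ?_
        have hA : Commute (q (a^k)) (q (a^j)) := by
          simp only [map_zpow]
          exact (Commute.refl (q a)).zpow_zpow k j
        have h1 : Commute (q (a^k) * q w₁) (q (a^j) * q w₂) := by
          have c1 : Commute (q (a^k)) (q (a^j) * q w₂) :=
            hA.mul_right ((hcentral w₂ hw₂ (a^k)).symm)
          have c2 : Commute (q w₁) (q (a^j) * q w₂) :=
            (hcentral w₁ hw₁ (a^j)).mul_right (hcentral w₁ hw₁ w₂)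
          exact c1.mul_left c2
        rw [map_mul, map_mul]; exact h1
      rw [_root_.commutator_def]
      exact Subgroup.commutator_le.mpr fun g₁ _ g₂ _ => key g₁ g₂
  obtain ⟨n, hn⟩ := Subgroup.nilpotent_iff_lowerCentralSeries.mp ‹_›
  have hbot : Subgroup.lowerCentralSeries (⊤ : Subgroup Γ) (n+1) = ⊥ := by
    have : Subgroup.lowerCentralSeries (⊤ : Subgroup Γ) (n+1) = ⁅Subgroup.lowerCentralSeries ⊤ n, ⊤⁆ := rfl
    rw [this, hn, Subgroup.commutator_bot_left]
  have : ⁅a, b⁆ ∈ (⊥ : Subgroup Γ) := by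
    rw [← hbot]
    exact claim n (commutator_mem_commutator (mem_top a) (mem_top b))
  exact commutatorElement_eq_one_iff_commute.mp (Subgroup.mem_bot.mp this)

/-- Frattini-type: in a nilpotent group, if `s` is conjugate to `r` inside `⟨r,s⟩`,
then `r` and `s` commute. -/
private lemma comm_of_conj_in_closure {Γ : Type*} [Group Γ] [Group.IsNilpotent Γ]
    {r s h : Γ} (hh : h ∈ Subgroup.closure {r, s}) (hs : h * r * h⁻¹ = s) :
    Commute r s := by
  set H := Subgroup.closure {r, s} with hH
  have hrH : r ∈ H := subset_closure (by simp)
  have hsH : s ∈ H := subset_closure (by simp)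
  set r' : ↥H := ⟨r, hrH⟩
  set s' : ↥H := ⟨s, hsH⟩
  set h' : ↥H := ⟨h, hh⟩
  have htop : (⊤ : Subgroup ↥H) = Subgroup.closure {r', s'} := by
    apply Subgroup.map_injective (Subgroup.subtype_injective H)
    rw [MonoidHom.map_closure]
    rw [← MonoidHom.range_eq_map, Subgroup.subtype_range]
    have : (H.subtype '' {r', s'}) = {r, s} := by
      rw [Set.image_pair]
      rfl
    rw [this, hH]
  have hcon : h' * r' * h'⁻¹ = s' := Subtype.ext (by push_cast; exact hs)
  have := abelian_of_top htop hcon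
  have h2 : r * s = s * r := congrArg Subtype.val this
  exact h2

private lemma orbit_card_dvd {G : Type*} [Group G] (T : Subgroup G) [T.Normal] (r s : G)
    (ht : r⁻¹ * s ∈ T) :
    Nat.card {y : G | ∃ h ∈ Subgroup.closure {r, s}, h * r * h⁻¹ = y} ∣
      Nat.card ↥(Subgroup.closure {r, s} ⊓ T) := by
  set H := Subgroup.closure {r, s} with hH
  set M := H ⊓ T with hM
  have hrH : r ∈ H := subset_closure (by simp)
  have hsH : s ∈ H := subset_closure (by simp)
  have hrn : r ∈ Subgroup.normalizer (M : Set G) := by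
    rw [mem_normalizer_iff]
    intro h
    constructor
    · rintro ⟨h1, h2⟩
      exact ⟨H.mul_mem (H.mul_mem hrH h1) (H.inv_mem hrH), Subgroup.Normal.conj_mem ‹T.Normal› h h2 r⟩
    · rintro ⟨h1, h2⟩
      have k1 : r⁻¹ * (r * h * r⁻¹) * r ∈ H := H.mul_mem (H.mul_mem (H.inv_mem hrH) h1) hrH
      have k2 : r⁻¹ * (r * h * r⁻¹) * (r⁻¹)⁻¹ ∈ T := Subgroup.Normal.conj_mem ‹T.Normal› _ h2 r⁻¹
      have e : r⁻¹ * (r * h * r⁻¹) * r = h := by group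
      rw [e] at k1
      rw [inv_inv, e] at k2
      exact ⟨k1, k2⟩
  have hzn : ∀ k : ℤ, r ^ k ∈ Subgroup.normalizer (M : Set G) := fun k => zpow_mem hrn k
  set P : Subgroup G :=
    { carrier := {g | ∃ (k : ℤ), ∃ m ∈ M, g = r ^ k * m}
      one_mem' := ⟨0, 1, M.one_mem, by simp⟩
      mul_mem' := by
        rintro g₁ g₂ ⟨k, m, hm, rfl⟩ ⟨j, m', hm', rfl⟩
        have hmm : r ^ (-j) * m * (r ^ (-j))⁻¹ ∈ M := (mem_normalizer_iff.mp (hzn (-j)) m).mp hm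
        exact ⟨k + j, (r ^ (-j) * m * (r ^ (-j))⁻¹) * m', mul_mem hmm hm', by group⟩
      inv_mem' := by
        rintro g ⟨k, m, hm, rfl⟩
        have hmm : r ^ k * m⁻¹ * (r ^ k)⁻¹ ∈ M :=
          (mem_normalizer_iff.mp (hzn k) m⁻¹).mp (inv_mem hm)
        exact ⟨-k, r ^ k * m⁻¹ * (r ^ k)⁻¹, hmm, by group⟩ } with hP
  have hHP : H ≤ P := by
    rw [hH]
    refine (closure_le _).mpr ?_
    intro y hy
    rcases Set.mem_insert_iff.mp hy with h1 | h1
    · exact h1 ▸ ⟨1, 1, M.one_mem, by group⟩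
    · rw [Set.mem_singleton_iff.mp h1]
      exact ⟨1, r⁻¹ * s, ⟨H.mul_mem (H.inv_mem hrH) hsH, ht⟩, by group⟩
  set f : ↥M → G := fun m => (m : G) * r * (m : G)⁻¹ with hf
  have key1 : {y : G | ∃ h ∈ H, h * r * h⁻¹ = y} = Set.range f := by
    ext y
    constructor
    · rintro ⟨h, hh, rfl⟩
      obtain ⟨k, m, hm, rfl⟩ := hHP hh
      have hmm : r ^ k * m * (r ^ k)⁻¹ ∈ M := (mem_normalizer_iff.mp (hzn k) m).mp hm
      exact ⟨⟨r ^ k * m * (r ^ k)⁻¹, hmm⟩, by rw [hf]; show _ = _; push_cast; group⟩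
    · rintro ⟨m, rfl⟩
      exact ⟨(m : G), (inf_le_left : M ≤ H) m.2, rfl⟩
  set St : Subgroup ↥M := Subgroup.comap M.subtype (Subgroup.centralizer {r}) with hSt
  have resp : ∀ m₁ m₂ : ↥M, (QuotientGroup.leftRel St) m₁ m₂ → f m₁ = f m₂ := by
    intro m₁ m₂ hrel
    have h1 : m₁⁻¹ * m₂ ∈ St := QuotientGroup.leftRel_apply.mp hrel
    rw [hSt, mem_comap] at h1
    have h2 := mem_centralizer_iff.mp h1 r (Set.mem_singleton _)
    have h3 : r * ((m₁ : G)⁻¹ * (m₂ : G)) = ((m₁ : G)⁻¹ * (m₂ : G)) * r := by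
      simpa using h2
    set u := (m₁ : G); set v := (m₂ : G)
    have e1 : u * (r * (u⁻¹ * v)) * v⁻¹ = u * r * u⁻¹ := by group
    have e2 : u * ((u⁻¹ * v) * r) * v⁻¹ = v * r * v⁻¹ := by group
    show u * r * u⁻¹ = v * r * v⁻¹
    rw [← e1, h3, e2]
  set e : (↥M ⧸ St) → Set.range f :=
    Quotient.lift (fun m => (⟨f m, ⟨m, rfl⟩⟩ : Set.range f))
      (fun m₁ m₂ h => Subtype.ext (resp m₁ m₂ h)) with he
  have hbij : Function.Bijective e := by
    constructor
    · intro q₁ q₂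
      refine Quotient.inductionOn₂ q₁ q₂ ?_
      intro m₁ m₂ hEq
      have heq : f m₁ = f m₂ := congrArg Subtype.val hEq
      set u := (m₁ : G); set v := (m₂ : G)
      have e1 : r * (u⁻¹ * v) = u⁻¹ * (u * r * u⁻¹) * v := by group
      have e2 : u⁻¹ * (v * r * v⁻¹) * v = (u⁻¹ * v) * r := by group
      have h3 : r * (u⁻¹ * v) = (u⁻¹ * v) * r := by
        rw [e1]; rw [show u * r * u⁻¹ = v * r * v⁻¹ from heq]; exact e2
      refine Quotient.sound (QuotientGroup.leftRel_apply.mpr ?_)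
      rw [hSt, mem_comap]
      refine mem_centralizer_iff.mpr ?_
      intro g hg
      rw [Set.mem_singleton_iff.mp hg]
      simpa using h3
    · rintro ⟨y, m, rfl⟩
      exact ⟨QuotientGroup.mk m, rfl⟩
  have hcard1 : Nat.card {y : G | ∃ h ∈ H, h * r * h⁻¹ = y} = Nat.card (↥M ⧸ St) := by
    rw [key1]
    exact (Nat.card_congr (Equiv.ofBijective e hbij)).symm
  rw [hcard1]
  exact Subgroup.card_quotient_dvd_card St

private lemma odd_of_dvd {d n : ℕ} (h : d ∣ n) (hn : Odd n) : Odd d := by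
  rcases Nat.even_or_odd d with he | ho
  · exfalso
    obtain ⟨t, rfl⟩ := he
    obtain ⟨k, rfl⟩ := h
    have h1 : (t + t) * k = 2 * (t * k) := by ring
    have := Nat.odd_iff.mp hn
    rw [h1] at this
    omega
  · exact ho

end AuxLemmas

open Subgroup in
/-- Let `G` be a finitely generated nilpotent group whose torsion subgroup `T` is
nontrivial and finite of odd order. Then every finite conjugacy class of `G` is either
abelian as a subrack or of type C. -/
theorem finite_conjclass_abelian_or_typeC_of_odd_torsion
    {G : Type*} [Group G] (hfg : Group.FG G) (hnil : Group.IsNilpotent G)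
    (T : Subgroup G) (hT : ∀ g : G, g ∈ T ↔ IsOfFinOrder g)
    (hTfin : (T : Set G).Finite) (hTne : T ≠ ⊥) (hTodd : Odd (Nat.card T))
    (x : G) (hOfin : ({y : G | ∃ g : G, g * x * g⁻¹ = y}).Finite) :
    (∀ y ∈ {y : G | ∃ g : G, g * x * g⁻¹ = y}, ∀ z ∈ {y : G | ∃ g : G, g * x * g⁻¹ = y},
      y * z * y⁻¹ = z) ∨
    IsTypeC {y : G | ∃ g : G, g * x * g⁻¹ = y} := by
  classical
  haveI : Group.IsNilpotent G := hnil
  set O := {y : G | ∃ g : G, g * x * g⁻¹ = y} with hO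
  haveI hTN : T.Normal := by
    constructor
    intro n hn g
    rw [hT] at hn ⊢
    obtain ⟨k, hk, hk1⟩ := isOfFinOrder_iff_pow_eq_one.mp hn
    refine isOfFinOrder_iff_pow_eq_one.mpr ⟨k, hk, ?_⟩
    rw [conj_pow, hk1]
    group
  set π := QuotientGroup.mk' T with hπ
  have hQtf : ∀ q : G ⧸ T, IsOfFinOrder q → q = 1 := by
    intro q hq
    induction q using QuotientGroup.induction_on with
    | _ g =>
      obtain ⟨n, hn, h1⟩ := isOfFinOrder_iff_pow_eq_one.mp hq
      have h2 : ((g ^ n : G) : G ⧸ T) = 1 := by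
        rw [← h1]; rfl
      have h3 : g ^ n ∈ T := (QuotientGroup.eq_one_iff _).mp h2
      have h4 : IsOfFinOrder (g ^ n) := (hT _).mp h3
      obtain ⟨k, hk, hk1⟩ := isOfFinOrder_iff_pow_eq_one.mp h4
      have h5 : IsOfFinOrder g :=
        isOfFinOrder_iff_pow_eq_one.mpr ⟨n * k, Nat.mul_pos hn hk, by rw [pow_mul]; exact hk1⟩
      exact (QuotientGroup.eq_one_iff _).mpr ((hT _).mpr h5)
  have hconjO : ∀ y ∈ O, ∀ g : G, g * y * g⁻¹ ∈ O := by
    rintro y ⟨g0, rfl⟩ g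
    exact ⟨g * g0, by group⟩
  have hxO : x ∈ O := ⟨1, by group⟩
  have hmodT : ∀ y ∈ O, x⁻¹ * y ∈ T := by
    rintro y ⟨g, rfl⟩
    haveI : Finite ↥O := hOfin.to_subtype
    have hcomm : ∃ m : ℕ, m ≠ 0 ∧ Commute (g ^ m) x := by
      have base : ∀ i j : ℕ, i < j → g ^ i * x * (g ^ i)⁻¹ = g ^ j * x * (g ^ j)⁻¹ →
          ∃ m : ℕ, m ≠ 0 ∧ Commute (g ^ m) x := by
        intro i j hij hfe
        set m := j - i with hm
        have hj : g ^ j = g ^ i * g ^ m := by rw [← pow_add]; congr 1; omega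
        have h1 : g ^ i * (x * g ^ m) = g ^ i * (g ^ m * x) := by
          calc g ^ i * (x * g ^ m) = (g ^ i * x * (g ^ i)⁻¹) * (g ^ i * g ^ m) := by group
          _ = (g ^ j * x * (g ^ j)⁻¹) * (g ^ i * g ^ m) := by rw [hfe]
          _ = ((g ^ i * g ^ m) * x * (g ^ i * g ^ m)⁻¹) * (g ^ i * g ^ m) := by rw [hj]
          _ = g ^ i * (g ^ m * x) := by group
        have h2 := mul_left_cancel h1
        exact ⟨m, by omega, h2.symm⟩
      obtain ⟨i, j, hij, hfe⟩ := Finite.exists_ne_map_eq_of_infinite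
        (fun n : ℕ => (⟨g ^ n * x * (g ^ n)⁻¹, ⟨g ^ n, rfl⟩⟩ : ↥O))
      have hfe' : g ^ i * x * (g ^ i)⁻¹ = g ^ j * x * (g ^ j)⁻¹ := congrArg Subtype.val hfe
      rcases lt_or_gt_of_ne hij with h | h
      · exact base i j h hfe'
      · exact base j i h hfe'.symm
    obtain ⟨m, hm, hcm⟩ := hcomm
    have hq : Commute ((π g) ^ m) (π x) := by
      have h1 : π (g ^ m * x) = π (x * g ^ m) := congrArg π hcm
      exact (by simpa [map_mul, map_pow] using h1 : π g ^ m * π x = π x * π g ^ m)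
    have hq2 : Commute (π g) (π x) := cent hQtf hm hq
    have h3 : π (x⁻¹ * (g * x * g⁻¹)) = 1 := by
      have e : π (g * x * g⁻¹) = π x := by
        simp only [map_mul, map_inv]
        rw [hq2.eq]
        group
      rw [map_mul, map_inv, e]
      group
    exact (QuotientGroup.eq_one_iff _).mp h3
  have hrel : ∀ r ∈ O, ∀ s ∈ O, r⁻¹ * s ∈ T := by
    intro r hr s hs
    have h1 := hmodT r hr
    have h2 := hmodT s hs
    have h3 : r⁻¹ * s = (x⁻¹ * r)⁻¹ * (x⁻¹ * s) := by group
    rw [h3]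
    exact T.mul_mem (T.inv_mem h1) h2
  by_cases habel : ∀ y ∈ O, ∀ z ∈ O, y * z * y⁻¹ = z
  · exact Or.inl habel
  right
  push_neg at habel
  obtain ⟨r, hrO, s, hsO, hns⟩ := habel
  set H := Subgroup.closure ({r, s} : Set G) with hHdef
  have hrH : r ∈ H := Subgroup.subset_closure (by simp)
  have hsH : s ∈ H := Subgroup.subset_closure (by simp)
  set R := {y : G | ∃ h ∈ H, h * r * h⁻¹ = y} with hRdef
  set S := {y : G | ∃ h ∈ H, h * s * h⁻¹ = y} with hSdef
  have hrR : r ∈ R := ⟨1, H.one_mem, by group⟩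
  have hsS : s ∈ S := ⟨1, H.one_mem, by group⟩
  have hRO : R ⊆ O := by rintro y ⟨h, hh, rfl⟩; exact hconjO r hrO h
  have hSO : S ⊆ O := by rintro y ⟨h, hh, rfl⟩; exact hconjO s hsO h
  have hRsubH : R ⊆ (H : Set G) := by
    rintro y ⟨h, hh, rfl⟩
    exact H.mul_mem (H.mul_mem hh hrH) (H.inv_mem hh)
  have hSsubH : S ⊆ (H : Set G) := by
    rintro y ⟨h, hh, rfl⟩
    exact H.mul_mem (H.mul_mem hh hsH) (H.inv_mem hh)
  have hclosure : Subgroup.closure (R ∪ S) = H := by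
    apply le_antisymm
    · exact (closure_le _).mpr (Set.union_subset hRsubH hSsubH)
    · rw [hHdef]
      refine (closure_le _).mpr ?_
      intro y hy
      rcases Set.mem_insert_iff.mp hy with h1 | h1
      · rw [h1]; exact Subgroup.subset_closure (Or.inl hrR)
      · rw [Set.mem_singleton_iff.mp h1]; exact Subgroup.subset_closure (Or.inr hsS)
  have hdisj : Disjoint R S := by
    rw [Set.disjoint_left]
    rintro y ⟨h₁, hh₁, rfl⟩ ⟨h₂, hh₂, hy2⟩
    have hcon : (h₂⁻¹ * h₁) * r * (h₂⁻¹ * h₁)⁻¹ = s := by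
      have h5 : h₂⁻¹ * (h₂ * s * h₂⁻¹) * h₂ = s := by group
      rw [hy2] at h5
      rw [← h5]; group
    have hcomm : Commute r s :=
      comm_of_conj_in_closure (H.mul_mem (H.inv_mem hh₂) hh₁) hcon
    apply hns
    rw [hcomm.eq]
    group
  have hsubrack : IsSubrack (R ∪ S) := by
    intro y hy z hz
    have hyH : y ∈ H := (Set.union_subset hRsubH hSsubH) hy
    constructor
    · rcases hz with hz | hz
      · obtain ⟨h, hh, rfl⟩ := hz
        exact Or.inl ⟨y * h, H.mul_mem hyH hh, by group⟩
      · obtain ⟨h, hh, rfl⟩ := hz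
        exact Or.inr ⟨y * h, H.mul_mem hyH hh, by group⟩
    · rcases hz with hz | hz
      · obtain ⟨h, hh, rfl⟩ := hz
        exact Or.inl ⟨y⁻¹ * h, H.mul_mem (H.inv_mem hyH) hh, by group⟩
      · obtain ⟨h, hh, rfl⟩ := hz
        exact Or.inr ⟨y⁻¹ * h, H.mul_mem (H.inv_mem hyH) hh, by group⟩
  -- cardinalities
  have hdvdR : Nat.card R ∣ Nat.card ↥(H ⊓ T) := by
    rw [hRdef, hHdef]
    exact orbit_card_dvd T r s (hrel r hrO s hsO)
  have hdvdS : Nat.card S ∣ Nat.card ↥(H ⊓ T) := by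
    have hpair : ({s, r} : Set G) = {r, s} := Set.pair_comm s r
    have h1 := orbit_card_dvd T s r (hrel s hsO r hrO)
    rw [hpair] at h1
    rw [hSdef, hHdef]
    exact h1
  have hMT : Nat.card ↥(H ⊓ T) ∣ Nat.card T := Subgroup.card_dvd_of_le inf_le_right
  have hoddR : Odd (Nat.card R) := odd_of_dvd (hdvdR.trans hMT) hTodd
  have hoddS : Odd (Nat.card S) := odd_of_dvd (hdvdS.trans hMT) hTodd
  have hRfin : R.Finite := hOfin.subset hRO
  have hSfin : S.Finite := hOfin.subset hSO
  have hR2 : 1 < Nat.card R := by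
    rw [Nat.card_coe_set_eq]
    refine (Set.one_lt_ncard hRfin).mpr ⟨r, hrR, s * r * s⁻¹, ⟨s, hsH, rfl⟩, ?_⟩
    intro hEq
    apply hns
    have : s * r = r * s := by
      have := hEq
      calc s * r = (s * r * s⁻¹) * s := by group
      _ = r * s := by rw [← this]
    rw [← this]; group
  have hS2 : 1 < Nat.card S := by
    rw [Nat.card_coe_set_eq]
    refine (Set.one_lt_ncard hSfin).mpr ⟨s, hsS, r * s * r⁻¹, ⟨r, hrH, rfl⟩, ?_⟩
    intro hEq
    exact hns hEq.symm
  have hR3 : 2 < Nat.card R := by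
    obtain ⟨k, hk⟩ := hoddR
    omega
  have hS3 : 2 < Nat.card S := by
    obtain ⟨k, hk⟩ := hoddS
    omega
  refine ⟨R, S, ⟨r, hrR⟩, ⟨s, hsS⟩, hdisj, Set.union_subset hRO hSO, hsubrack,
    r, hrR, s, hsS, hns, ?_, ?_, Or.inl (lt_min hR3 hS3)⟩
  · rw [hclosure]
  · rw [hclosure]
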